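/- Let H, G be locally compact groups, Y ∈ Ω₀(H) a nonempty element of the open coset ring of H, and α : Aff(Y) → G an affine map such that the restriction α|_Y is proper. Then α is proper on Aff(Y). -/

import Mathlib

/-- An open coset of a topological group. -/
def IsOpenCoset {H : Type*} [Group H] [TopologicalSpace H] (S : Set H) : Prop :=
  ∃ (K : Subgroup H) (x : H), IsOpen (K : Set H) ∧ S = (fun h => x * h) '' (K : Set H)

/-- `S` is an open subcoset of infinite index in the open coset `Y`. -/
def IsOpenSubcosetInfIndex {H : Type*} [Group H] [TopologicalSpace H]
    (S Y : Set H) : Prop :=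
  ∃ (K L : Subgroup H) (y x : H), IsOpen (K : Set H) ∧ IsOpen (L : Set H) ∧
    Y = (fun h => y * h) '' (K : Set H) ∧ S = (fun h => x * h) '' (L : Set H) ∧
    S ⊆ Y ∧ (L.subgroupOf K).index = 0

open Pointwise

lemma mem_lcoset_iff {H : Type*} [Group H] {a z : H} {S : Set H} :
    z ∈ (fun h => a * h) '' S ↔ a⁻¹ * z ∈ S := by
  constructor
  · rintro ⟨s, hs, rfl⟩
    simpa using hs
  · intro h
    exact ⟨a⁻¹ * z, h, by group⟩

/-- A coset determines its subgroup. -/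
lemma coset_eq_subgroup {H : Type*} [Group H] {K K' : Subgroup H} {a b : H}
    (h : (fun h => a * h) '' (K : Set H) = (fun h => b * h) '' (K' : Set H)) :
    K = K' := by
  have key : ∀ (K K' : Subgroup H) (a b : H),
      (fun h => a * h) '' (K : Set H) = (fun h => b * h) '' (K' : Set H) → K' ≤ K := by
    intro K K' a b h
    have hb : a⁻¹ * b ∈ K := by
      have hmem : b ∈ (fun h => b * h) '' (K' : Set H) :=
        mem_lcoset_iff.mpr (by simpa using K'.one_mem)
      rw [← h] at hmem
      simpa using mem_lcoset_iff.mp hmem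
    intro k' hk'
    have hbk : a⁻¹ * (b * k') ∈ K := by
      have hmem : b * k' ∈ (fun h => b * h) '' (K' : Set H) :=
        mem_lcoset_iff.mpr (by simpa using hk')
      rw [← h] at hmem
      simpa using mem_lcoset_iff.mp hmem
    have : (a⁻¹ * b)⁻¹ * (a⁻¹ * (b * k')) ∈ K := mul_mem (inv_mem hb) hbk
    have he : (a⁻¹ * b)⁻¹ * (a⁻¹ * (b * k')) = k' := by group
    rwa [he] at this
  exact le_antisymm (key K' K b a h.symm) (key K K' a b h)

/-- Greedy construction of a long list with pairwise ratios avoiding finitely many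
infinite-index subgroups, via B. H. Neumann's lemma. -/
lemma exists_avoiding_list {Kg : Type*} [Group Kg] {n : ℕ} (L : Fin n → Subgroup Kg)
    (hL : ∀ i, (L i).index = 0) (m : ℕ) :
    ∃ l : List Kg, l.length = m ∧ l.Pairwise (fun a b => ∀ i, a⁻¹ * b ∉ L i) := by
  induction m with
  | zero => exact ⟨[], rfl, List.Pairwise.nil⟩
  | succ m ih =>
    obtain ⟨l, hlen, hpw⟩ := ih
    have hne : (⋃ p : Fin l.length × Fin n, (l.get p.1) • ((L p.2 : Subgroup Kg) : Set Kg))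
        ≠ Set.univ := by
      intro hcov
      have hcov' : ⋃ p ∈ (Finset.univ : Finset (Fin l.length × Fin n)),
          (l.get p.1) • ((L p.2 : Subgroup Kg) : Set Kg) = Set.univ := by
        simpa using hcov
      obtain ⟨k, _, hfin⟩ := Subgroup.exists_finiteIndex_of_leftCoset_cover hcov'
      exact hfin.index_ne_zero (hL k.2)
    obtain ⟨a, ha⟩ := (Set.ne_univ_iff_exists_notMem _).mp hne
    refine ⟨a :: l, by simp [hlen], List.pairwise_cons.mpr ⟨?_, hpw⟩⟩
    intro b hb i hmem
    obtain ⟨idx, rfl⟩ := List.mem_iff_get.mp hb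
    apply ha
    refine Set.mem_iUnion.mpr ⟨⟨idx, i⟩, ?_⟩
    rw [mem_leftCoset_iff]
    have : (a⁻¹ * l.get idx)⁻¹ = (l.get idx)⁻¹ * a := by group
    exact this ▸ inv_mem hmem

/-- If `Y = Y₀ \ ⋃ᵢ Yᵢ` is a nonempty member of the open coset
ring (`Aff(Y) = Y₀`) and `α : Aff(Y) → G` is affine with `α|_Y` proper, then
`α` is proper on `Aff(Y)`. -/
theorem stmt11 {H G : Type*} [Group H] [TopologicalSpace H] [IsTopologicalGroup H]
    [LocallyCompactSpace H] [T2Space H]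
    [Group G] [TopologicalSpace G] [IsTopologicalGroup G]
    [LocallyCompactSpace G] [T2Space G]
    (Y₀ : Set H) (hY₀ : IsOpenCoset Y₀)
    (n : ℕ) (Yi : Fin n → Set H) (hYi : ∀ i, IsOpenSubcosetInfIndex (Yi i) Y₀)
    (Y : Set H) (hY : Y = Y₀ \ ⋃ i, Yi i) (hYne : Y.Nonempty)
    (α : H → G)
    (haff : ∀ x ∈ Y₀, ∀ y ∈ Y₀, ∀ z ∈ Y₀, α (x * y⁻¹ * z) = α x * (α y)⁻¹ * α z)
    (hprop : ∀ K : Set G, IsCompact K → IsCompact {h ∈ Y | α h ∈ K}) :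
    ∀ K : Set G, IsCompact K → IsCompact {h ∈ Y₀ | α h ∈ K} := by
  obtain ⟨K₀, x₀, _hK₀open, hY₀eq⟩ := hY₀
  obtain ⟨y, hyY⟩ := hYne
  have hyY₀ : y ∈ Y₀ := (hY ▸ hyY).1
  -- rebase: `Y₀ = y • K₀`
  have hY₀y : Y₀ = (fun h => y * h) '' (K₀ : Set H) := by
    have hxy : x₀⁻¹ * y ∈ K₀ := by
      have hmem : y ∈ (fun h => x₀ * h) '' (K₀ : Set H) := hY₀eq ▸ hyY₀
      simpa using mem_lcoset_iff.mp hmem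
    rw [hY₀eq]
    ext z
    rw [mem_lcoset_iff, mem_lcoset_iff]
    constructor
    · intro h
      have : (x₀⁻¹ * y)⁻¹ * (x₀⁻¹ * z) ∈ K₀ := mul_mem (inv_mem hxy) h
      have he : (x₀⁻¹ * y)⁻¹ * (x₀⁻¹ * z) = y⁻¹ * z := by group
      rwa [he] at this
    · intro h
      have : (x₀⁻¹ * y) * (y⁻¹ * z) ∈ K₀ := mul_mem hxy h
      have he : (x₀⁻¹ * y) * (y⁻¹ * z) = x₀⁻¹ * z := by group
      rwa [he] at this
  choose Ki Li yi xi hKiopen hLiopen hYKi hYiL hsub hind using hYi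
  -- all the `Ki` equal `K₀`
  have hKi : ∀ i, Ki i = K₀ := fun i => coset_eq_subgroup ((hYKi i).symm.trans hY₀y)
  have hind' : ∀ i, ((Li i).subgroupOf K₀).index = 0 := fun i => by
    rw [← hKi i]; exact hind i
  -- ratios of elements of `Yi i` lie in `Li i`
  have hratio : ∀ i, ∀ u ∈ Yi i, ∀ v ∈ Yi i, u⁻¹ * v ∈ Li i := by
    intro i u hu v hv
    rw [hYiL i, mem_lcoset_iff] at hu hv
    have : ((xi i)⁻¹ * u)⁻¹ * ((xi i)⁻¹ * v) ∈ Li i := mul_mem (inv_mem hu) hv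
    have he : ((xi i)⁻¹ * u)⁻¹ * ((xi i)⁻¹ * v) = u⁻¹ * v := by group
    rwa [he] at this
  -- the translators
  obtain ⟨l, hlen, hpw⟩ :=
    exists_avoiding_list (Kg := K₀) (fun i => (Li i).subgroupOf K₀) hind' (n + 1)
  set t : Fin (n + 1) → K₀ := fun j => l.get (Fin.cast hlen.symm j) with ht
  have hpw' : ∀ j k : Fin (n + 1), j ≠ k → ∀ i, ((t j : H))⁻¹ * (t k : H) ∉ Li i := by
    have hg := List.pairwise_iff_get.mp hpw
    intro j k hjk i hmem
    rcases hjk.lt_or_gt with hlt | hlt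
    · have := hg (Fin.cast hlen.symm j) (Fin.cast hlen.symm k) (by simpa using hlt) i
      apply this
      rw [Subgroup.mem_subgroupOf]
      simpa [ht] using hmem
    · have := hg (Fin.cast hlen.symm k) (Fin.cast hlen.symm j) (by simpa using hlt) i
      apply this
      rw [Subgroup.mem_subgroupOf]
      have : ((t j : H))⁻¹ * (t k : H) = (((t k : H))⁻¹ * (t j : H))⁻¹ := by group
      rw [this] at hmem
      simpa [ht] using inv_mem hmem
  -- finitely many right translates of `Y` cover `Y₀`
  have hcover : ∀ h ∈ Y₀, ∃ j : Fin (n + 1), h * (t j : H) ∈ Y := by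
    intro h hh
    rw [hY₀y] at hh
    obtain ⟨x, hx, rfl⟩ := hh
    by_contra hcon
    push_neg at hcon
    have hmem : ∀ j : Fin (n + 1), ∃ i, y * x * (t j : H) ∈ Yi i := by
      intro j
      have hY₀mem : y * x * (t j : H) ∈ Y₀ := by
        rw [hY₀y]
        exact ⟨x * (t j : H), mul_mem hx (t j).2, by simp [mul_assoc]⟩
      have := hcon j
      rw [hY] at this
      simp only [Set.mem_diff, not_and, not_not] at this
      exact Set.mem_iUnion.mp (this hY₀mem)
    choose f hf using hmem
    obtain ⟨j, k, hjk, hfeq⟩ := Fintype.exists_ne_map_eq_of_card_lt f (by simp)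
    have h1 : y * x * (t j : H) ∈ Yi (f j) := hf j
    have h2 : y * x * (t k : H) ∈ Yi (f j) := hfeq ▸ hf k
    have := hratio (f j) _ h1 _ h2
    have he : (y * x * (t j : H))⁻¹ * (y * x * (t k : H)) = ((t j : H))⁻¹ * (t k : H) := by
      group
    rw [he] at this
    exact hpw' j k hjk (f j) this
  -- main argument
  intro K hK
  have hyt : ∀ j : Fin (n + 1), y * (t j : H) ∈ Y₀ := by
    intro j
    rw [hY₀y]
    exact ⟨(t j : H), (t j).2, rfl⟩
  set c : Fin (n + 1) → G := fun j => (α y)⁻¹ * α (y * (t j : H)) with hc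
  have hKj : ∀ j, IsCompact ((fun g => g * c j) '' K) :=
    fun j => hK.image (continuous_mul_right _)
  have hCj : ∀ j, IsCompact {h ∈ Y | α h ∈ (fun g => g * c j) '' K} :=
    fun j => hprop _ (hKj j)
  have hset : {h ∈ Y₀ | α h ∈ K} =
      ⋃ j, (fun h => h * ((t j : H))⁻¹) '' {h ∈ Y | α h ∈ (fun g => g * c j) '' K} := by
    ext h
    simp only [Set.mem_iUnion, Set.mem_image, Set.mem_setOf_eq]
    constructor
    · rintro ⟨hh, hαh⟩
      obtain ⟨j, hj⟩ := hcover h hh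
      refine ⟨j, h * (t j : H), ⟨hj, ?_⟩, by group⟩
      have haffj := haff h hh y hyY₀ (y * (t j : H)) (hyt j)
      have harg : h * y⁻¹ * (y * (t j : H)) = h * (t j : H) := by group
      rw [harg] at haffj
      exact ⟨α h, hαh, by rw [haffj, hc]; group⟩
    · rintro ⟨j, h', ⟨hh'Y, g, hgK, hgα⟩, rfl⟩
      have hh'Y₀ : h' ∈ Y₀ := (hY ▸ hh'Y).1
      constructor
      · rw [hY₀y] at hh'Y₀ ⊢
        obtain ⟨k, hk, rfl⟩ := hh'Y₀
        exact ⟨k * ((t j : H))⁻¹, mul_mem hk (inv_mem (t j).2), by simp [mul_assoc]⟩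
      · have haffj := haff h' hh'Y₀ (y * (t j : H)) (hyt j) y hyY₀
        have harg : h' * (y * (t j : H))⁻¹ * y = h' * ((t j : H))⁻¹ := by group
        rw [harg] at haffj
        rw [haffj, ← hgα, hc]
        have : g * ((α y)⁻¹ * α (y * (t j : H))) * (α (y * (t j : H)))⁻¹ * α y = g := by
          group
        rwa [this]
  rw [hset]
  exact isCompact_iUnion fun j => (hCj j).image (continuous_mul_right _)
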